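/- Let T be a power-bounded operator on a complex separable Hilbert space H, let N := {x ∈ H : Tⁿx → 0}, and let K := N^⊥. Then N is a closed subspace invariant under T, the restriction T|_N is power-bounded of class C_{0·}, the compression T₂₂ := P_K T|_K (where P_K is the orthogonal projection onto K) is power-bounded, and T₂₂ is of class C_{1·}: for every f ∈ K, if T₂₂ⁿ f → 0 then f = 0. -/

import Mathlib

open Filter ContinuousLinearMap

/-- Kérchy's lemma: For a power-bounded `T`, the set `N = {x | Tⁿx → 0}` is a
closed `T`-invariant subspace, `T|_N` is power-bounded of class `C₀.`, and for `K = Nᗮ` the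
compression `T₂₂ = P_K T|_K` (realized as `P ∘L T` acting on `K`, where `P` is the orthogonal
projection onto `K`) is power-bounded and of class `C₁.`: `T₂₂ⁿ f → 0` implies `f = 0`. -/
theorem stmt_11
    {H : Type*} [NormedAddCommGroup H] [InnerProductSpace ℂ H] [CompleteSpace H]
    [TopologicalSpace.SeparableSpace H]
    (T : H →L[ℂ] H) (hT : ∃ C : ℝ, ∀ n : ℕ, ‖T ^ n‖ ≤ C) :
    ∃ N : Submodule ℂ H,
      (N : Set H) =
        {x : H | Filter.Tendsto (fun n : ℕ => (T ^ n) x) Filter.atTop (nhds 0)} ∧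
      IsClosed (N : Set H) ∧
      (∀ x ∈ N, T x ∈ N) ∧
      (∃ C : ℝ, ∀ n : ℕ, ∀ x ∈ N, ‖(T ^ n) x‖ ≤ C * ‖x‖) ∧
      (∀ x ∈ N, Filter.liminf (fun n : ℕ => ‖(T ^ n) x‖) Filter.atTop = 0) ∧
      (∀ P : H →L[ℂ] H, (∀ x : H, P x ∈ Nᗮ) → (∀ x : H, x - P x ∈ N) →
        ((∃ C : ℝ, ∀ n : ℕ, ∀ f ∈ Nᗮ, ‖((P ∘L T) ^ n) f‖ ≤ C * ‖f‖) ∧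
         (∀ f ∈ Nᗮ, Filter.Tendsto (fun n : ℕ => ((P ∘L T) ^ n) f) Filter.atTop (nhds 0) →
            f = 0))) := by
  classical
  obtain ⟨C, hC⟩ := hT
  set C₀ : ℝ := max C 1 with hC₀def
  have hC₀pos : (0 : ℝ) < C₀ := lt_of_lt_of_le one_pos (le_max_right _ _)
  have hC₀ : ∀ n : ℕ, ‖T ^ n‖ ≤ C₀ := fun n => le_trans (hC n) (le_max_left _ _)
  have hbound : ∀ (n : ℕ) (x : H), ‖(T ^ n) x‖ ≤ C₀ * ‖x‖ := fun n x =>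
    le_trans ((T ^ n).le_opNorm x) (mul_le_mul_of_nonneg_right (hC₀ n) (norm_nonneg x))
  set N : Submodule ℂ H :=
    { carrier := {x : H | Tendsto (fun n : ℕ => (T ^ n) x) atTop (nhds 0)}
      add_mem' := by
        intro a b ha hb
        have := ha.add hb
        simpa using this
      zero_mem' := by
        simpa using (tendsto_const_nhds :
          Tendsto (fun _ : ℕ => (0 : H)) atTop (nhds 0))
      smul_mem' := by
        intro c x hx
        have := hx.const_smul c
        exact (by simpa only [map_smul, smul_zero] using this :
          Tendsto (fun n : ℕ => (T ^ n) (c • x)) atTop (nhds 0)) } with hNdef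
  have hmemN : ∀ x : H, x ∈ N ↔ Tendsto (fun n : ℕ => (T ^ n) x) atTop (nhds 0) :=
    fun x => Iff.rfl
  have hinv : ∀ x ∈ N, T x ∈ N := by
    intro x hx
    rw [hmemN] at hx ⊢
    have := hx.comp (tendsto_add_atTop_nat 1)
    have heq : (fun n : ℕ => (T ^ (n + 1)) x) = fun n : ℕ => (T ^ n) (T x) := by
      funext n
      rw [pow_succ, ContinuousLinearMap.mul_apply]
    rw [← heq]
    exact this
  refine ⟨N, rfl, ?_, hinv, ⟨C₀, fun n x _ => hbound n x⟩, ?_, ?_⟩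
  · -- closedness
    apply isClosed_of_closure_subset
    intro x hx
    show Tendsto (fun n : ℕ => (T ^ n) x) atTop (nhds 0)
    rw [NormedAddCommGroup.tendsto_nhds_zero]
    intro ε hε
    obtain ⟨y, hyN, hy⟩ := Metric.mem_closure_iff.mp hx (ε / (2 * C₀)) (by positivity)
    have hy' : ‖x - y‖ < ε / (2 * C₀) := by rwa [dist_eq_norm] at hy
    have hyt : Tendsto (fun n : ℕ => (T ^ n) y) atTop (nhds 0) := hyN
    obtain ⟨M, hM⟩ := eventually_atTop.mp
      ((NormedAddCommGroup.tendsto_nhds_zero.mp hyt) (ε / 2) (by positivity))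
    refine eventually_atTop.mpr ⟨M, fun n hn => ?_⟩
    have h1 : ‖(T ^ n) x‖ ≤ ‖(T ^ n) (x - y)‖ + ‖(T ^ n) y‖ := by
      calc ‖(T ^ n) x‖ = ‖(T ^ n) (x - y) + (T ^ n) y‖ := by
            rw [map_sub, sub_add_cancel]
        _ ≤ ‖(T ^ n) (x - y)‖ + ‖(T ^ n) y‖ := norm_add_le _ _
    have h2 : ‖(T ^ n) (x - y)‖ < ε / 2 := by
      calc ‖(T ^ n) (x - y)‖ ≤ C₀ * ‖x - y‖ := hbound n _
        _ < C₀ * (ε / (2 * C₀)) := mul_lt_mul_of_pos_left hy' hC₀pos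
        _ = ε / 2 := by field_simp
    linarith [hM n hn]
  · -- liminf
    intro x hx
    rw [hmemN] at hx
    have := hx.norm
    simp only [norm_zero] at this
    exact this.liminf_eq
  · -- compression part
    intro P hPmem hPsub
    have hdiff : ∀ (f : H) (n : ℕ), (T ^ n) f - ((P ∘L T) ^ n) f ∈ N := by
      intro f n
      induction n with
      | zero => simpa using N.zero_mem
      | succ n ih =>
        have h1 : (T ^ (n + 1)) f - T (((P ∘L T) ^ n) f) ∈ N := by
          have h := hinv _ ih
          have heq : T ((T ^ n) f - ((P ∘L T) ^ n) f)
              = (T ^ (n + 1)) f - T (((P ∘L T) ^ n) f) := by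
            rw [map_sub, pow_succ', ContinuousLinearMap.mul_apply]
          rwa [heq] at h
        have h2 : T (((P ∘L T) ^ n) f) - P (T (((P ∘L T) ^ n) f)) ∈ N := hPsub _
        have h3 := N.add_mem h1 h2
        have heq2 : ((P ∘L T) ^ (n + 1)) f = P (T (((P ∘L T) ^ n) f)) := by
          rw [pow_succ', ContinuousLinearMap.mul_apply]; rfl
        rw [heq2]
        convert h3 using 1
        abel
    have hg_mem : ∀ f ∈ Nᗮ, ∀ n : ℕ, ((P ∘L T) ^ n) f ∈ Nᗮ := by
      intro f hf n
      cases n with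
      | zero => simpa using hf
      | succ n =>
        rw [pow_succ', ContinuousLinearMap.mul_apply]
        exact hPmem _
    have key : ∀ u v : H, u ∈ N → v ∈ Nᗮ → ‖v‖ ≤ ‖u + v‖ := by
      intro u v hu hv
      have h0 : (inner ℂ u v : ℂ) = 0 := (Submodule.mem_orthogonal N v).mp hv u hu
      have := norm_add_sq_eq_norm_sq_add_norm_sq_of_inner_eq_zero u v h0
      nlinarith [norm_nonneg u, norm_nonneg v, norm_nonneg (u + v)]
    have hg_norm : ∀ f ∈ Nᗮ, ∀ n : ℕ, ‖((P ∘L T) ^ n) f‖ ≤ ‖(T ^ n) f‖ := by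
      intro f hf n
      have := key _ _ (hdiff f n) (hg_mem f hf n)
      rwa [sub_add_cancel] at this
    constructor
    · exact ⟨C₀, fun n f hf => le_trans (hg_norm f hf n) (hbound n f)⟩
    · intro f hf htend
      have hfN : f ∈ N := by
        rw [hmemN]
        rw [NormedAddCommGroup.tendsto_nhds_zero]
        intro ε hε
        obtain ⟨n₀, hn₀⟩ := eventually_atTop.mp
          (NormedAddCommGroup.tendsto_nhds_zero.mp htend (ε / (2 * C₀)) (by positivity))
        have hg0 : ‖((P ∘L T) ^ n₀) f‖ < ε / (2 * C₀) := hn₀ n₀ le_rfl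
        have hw : (T ^ n₀) f - ((P ∘L T) ^ n₀) f ∈ N := hdiff f n₀
        rw [hmemN] at hw
        obtain ⟨M, hM⟩ := eventually_atTop.mp
          (NormedAddCommGroup.tendsto_nhds_zero.mp hw (ε / 2) (by positivity))
        refine eventually_atTop.mpr ⟨M + n₀, fun k hk => ?_⟩
        have hk1 : n₀ ≤ k := le_trans (Nat.le_add_left _ _) hk
        have hk2 : M ≤ k - n₀ := by omega
        have hsplit : (T ^ (k - n₀)) ((T ^ n₀) f) = (T ^ k) f := by
          have hkk : k - n₀ + n₀ = k := by omega
          rw [← ContinuousLinearMap.mul_apply, ← pow_add, hkk]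
        have hcalc : ‖(T ^ k) f‖ ≤ ‖(T ^ (k - n₀)) ((T ^ n₀) f - ((P ∘L T) ^ n₀) f)‖
            + ‖(T ^ (k - n₀)) (((P ∘L T) ^ n₀) f)‖ := by
          calc ‖(T ^ k) f‖
              = ‖(T ^ (k - n₀)) ((T ^ n₀) f - ((P ∘L T) ^ n₀) f)
                  + (T ^ (k - n₀)) (((P ∘L T) ^ n₀) f)‖ := by
                rw [← map_add, sub_add_cancel, hsplit]
            _ ≤ _ := norm_add_le _ _
        have h4 : ‖(T ^ (k - n₀)) (((P ∘L T) ^ n₀) f)‖ < ε / 2 := by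
          calc ‖(T ^ (k - n₀)) (((P ∘L T) ^ n₀) f)‖
              ≤ C₀ * ‖((P ∘L T) ^ n₀) f‖ := hbound _ _
            _ < C₀ * (ε / (2 * C₀)) := mul_lt_mul_of_pos_left hg0 hC₀pos
            _ = ε / 2 := by field_simp
        linarith [hM (k - n₀) hk2]
      have : (inner ℂ f f : ℂ) = 0 := (Submodule.mem_orthogonal N f).mp hf f hfN
      exact inner_self_eq_zero.mp this
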